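/- arXiv:1602.07682 — 2 statements merged into one kernel-verified Lean document; each statement's English description precedes it below -/
import Mathlib

section
/- Fix n₀ ≥ 2 with Ξ(n₀) > 0, and let (aₙ) be the sequence with a_{n₀} = (A−B)(1−γ)/Ξ(n₀) and aₙ = 0 for all n ≠ n₀, so that F_μ(z) = z − ((A−B)(1−γ)/Ξ(n₀))·z^{μn₀}. Then F_μ belongs to the class Ẽ (this is the extremal function showing that the coefficient bound Σ_{n=2}^∞ Ξ(n)aₙ ≤ (A−B)(1−γ) is sharp). -/
open Complex

/-- `Ξ(n) = (1−B)((μn)^k ϑₙ − (μn)^m λₙ) + (A−B)(1−γ)(μn)^m λₙ`. -/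
noncomputable def Xi (μ A B γ : ℝ) (k m : ℕ) (ϑ lam : ℕ → ℝ) (n : ℕ) : ℝ :=
  (1 - B) * ((μ * n) ^ k * ϑ n - (μ * n) ^ m * lam n) +
    (A - B) * (1 - γ) * ((μ * n) ^ m * lam n)

/-- `Gneg μ j c a z = z − Σ_{n≥2} (μn)^j cₙ aₙ z^{μn}` (principal powers).
With `j = k, c = ϑ` this is `D_μ^k(F_μ∗Φ_μ)(z)`; with `j = m, c = λ` it is
`D_μ^m(F_μ∗Ψ_μ)(z)`. -/
noncomputable def Gneg (μ : ℝ) (j : ℕ) (c a : ℕ → ℝ) (z : ℂ) : ℂ :=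
  z - ∑' n : ℕ, (((μ * (n + 2 : ℕ)) ^ j * c (n + 2) * a (n + 2) : ℝ) : ℂ) *
    z ^ ((μ * (n + 2 : ℕ) : ℝ) : ℂ)

/-- `Fneg μ a z = z − Σ_{n≥2} aₙ z^{μn}` (principal powers). -/
noncomputable def Fneg (μ : ℝ) (a : ℕ → ℝ) (z : ℂ) : ℂ :=
  z - ∑' n : ℕ, (a (n + 2) : ℂ) * z ^ ((μ * (n + 2 : ℕ) : ℝ) : ℂ)

/-- Membership of `F_μ(z) = z − Σ_{n≥2} aₙ z^{μn}` in the class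
`Ẽ_{k,m}(Φ_μ,Ψ_μ,A,B,μ,γ)`: the series for `F_μ`, `G = D_μ^k(F_μ∗Φ_μ)` and
`H = D_μ^m(F_μ∗Ψ_μ)` converge absolutely at every `z ∈ 𝕌`, and for every
`z ∈ 𝕌 ∖ {0}` the subordination condition
`|G(z) − H(z)| < |(A−B)(1−γ)H(z) − B(G(z) − H(z))|` holds. -/
def memE (μ A B γ : ℝ) (k m : ℕ) (ϑ lam a : ℕ → ℝ) : Prop :=
  (∀ z : ℂ, ‖z‖ < 1 →
    ((Summable fun n : ℕ =>
      ‖(a (n + 2) : ℂ) * z ^ ((μ * (n + 2 : ℕ) : ℝ) : ℂ)‖) ∧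
    (Summable fun n : ℕ =>
      ‖(((μ * (n + 2 : ℕ)) ^ k * ϑ (n + 2) * a (n + 2) : ℝ) : ℂ) *
        z ^ ((μ * (n + 2 : ℕ) : ℝ) : ℂ)‖) ∧
    (Summable fun n : ℕ =>
      ‖(((μ * (n + 2 : ℕ)) ^ m * lam (n + 2) * a (n + 2) : ℝ) : ℂ) *
        z ^ ((μ * (n + 2 : ℕ) : ℝ) : ℂ)‖))) ∧
  (∀ z : ℂ, ‖z‖ < 1 → z ≠ 0 →
    ‖Gneg μ k ϑ a z - Gneg μ m lam a z‖ <
    ‖(((A - B) * (1 - γ) : ℝ) : ℂ) * Gneg μ m lam a z -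
      ((B : ℝ) : ℂ) * (Gneg μ k ϑ a z - Gneg μ m lam a z)‖)

/-- sharpness of the coefficient bound: for `n₀ ≥ 2` with `Ξ(n₀) > 0`,
the extremal function `F_μ(z) = z − ((A−B)(1−γ)/Ξ(n₀)) z^{μn₀}` (i.e. the coefficient
sequence with `a_{n₀} = (A−B)(1−γ)/Ξ(n₀)` and `aₙ = 0` otherwise) belongs to
`Ẽ_{k,m}(Φ_μ,Ψ_μ,A,B,μ,γ)`. -/
theorem stmt3 (μ A B γ : ℝ) (k m : ℕ) (ϑ lam : ℕ → ℝ)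
    (hμ : 1 ≤ μ) (hkm : m ≤ k)
    (hB : -1 ≤ B) (hBA : B < A) (hA : A ≤ 1) (hB0 : B < 0)
    (hγ0 : 0 ≤ γ) (hγ1 : γ < 1)
    (hlam : ∀ n, 2 ≤ n → 0 ≤ lam n) (hϑ : ∀ n, 2 ≤ n → lam n ≤ ϑ n)
    (n₀ : ℕ) (hn₀ : 2 ≤ n₀) (hXi : 0 < Xi μ A B γ k m ϑ lam n₀) :
    memE μ A B γ k m ϑ lam
      (fun n => if n = n₀ then (A - B) * (1 - γ) / Xi μ A B γ k m ϑ lam n₀ else 0) := by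
  have hn2 : (2:ℝ) ≤ μ * n₀ := by
    have : (2:ℝ) ≤ (n₀:ℝ) := by exact_mod_cast hn₀
    nlinarith
  have ht1 : (1:ℝ) ≤ μ * n₀ := by linarith
  set Ξ := Xi μ A B γ k m ϑ lam n₀ with hΞdef
  set e : ℝ := (A - B) * (1 - γ) with hedef
  have he0 : 0 < e := mul_pos (sub_pos.2 hBA) (sub_pos.2 hγ1)
  set c : ℝ := e / Ξ with hcdef
  have hc0 : 0 < c := div_pos he0 hXi
  have hΞc : Ξ * c = e := by
    rw [hcdef]; field_simp
  constructor
  · intro z hz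
    refine ⟨?_, ?_, ?_⟩ <;>
    · apply summable_of_ne_finset_zero (s := ({n₀ - 2} : Finset ℕ))
      intro n hn
      simp only [Finset.mem_singleton] at hn
      have h : ¬ (n + 2 = n₀) := by omega
      simp [h]
  · intro z hz hz0
    have hG : ∀ (j : ℕ) (cf : ℕ → ℝ),
        Gneg μ j cf (fun n => if n = n₀ then e / Ξ else 0) z
          = z - (((μ * n₀) ^ j * cf n₀ * c : ℝ) : ℂ) * z ^ ((μ * n₀ : ℝ) : ℂ) := by
      intro j cf
      unfold Gneg
      congr 1
      rw [tsum_eq_single (n₀ - 2)]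
      · have h2 : n₀ - 2 + 2 = n₀ := by omega
        rw [h2]
        simp [hcdef]
      · intro n hn
        have h : ¬ (n + 2 = n₀) := by omega
        simp [h]
    rw [hG k ϑ, hG m lam]
    set w : ℂ := z ^ ((μ * n₀ : ℝ) : ℂ) with hwdef
    set P : ℝ := (μ * n₀) ^ k * ϑ n₀ - (μ * n₀) ^ m * lam n₀ with hPdef
    set Q : ℝ := (μ * n₀) ^ m * lam n₀ with hQdef
    have hP0 : 0 ≤ P := by
      have h1 : (μ * n₀) ^ m ≤ (μ * n₀) ^ k := pow_le_pow_right₀ ht1 hkm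
      have h2 : 0 ≤ lam n₀ := hlam n₀ hn₀
      have h3 : lam n₀ ≤ ϑ n₀ := hϑ n₀ hn₀
      have : (μ * n₀) ^ m * lam n₀ ≤ (μ * n₀) ^ k * ϑ n₀ := by
        calc (μ * n₀) ^ m * lam n₀ ≤ (μ * n₀) ^ k * lam n₀ := by
              apply mul_le_mul_of_nonneg_right h1 h2
          _ ≤ (μ * n₀) ^ k * ϑ n₀ := by
              apply mul_le_mul_of_nonneg_left h3
              positivity
      linarith [this]
    have hQ0 : 0 ≤ Q := by
      have h2 : 0 ≤ lam n₀ := hlam n₀ hn₀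
      have : (0:ℝ) ≤ (μ * n₀) ^ m := by positivity
      exact mul_nonneg this h2
    have hΞPQ : Ξ = (1 - B) * P + e * Q := by
      rw [hΞdef, hPdef, hQdef, hedef]; unfold Xi; ring
    -- key: |w| < |z|
    have hz0' : 0 < ‖z‖ := by
      simpa [norm_pos_iff] using hz0
    have hw : ‖w‖ < ‖z‖ := by
      rw [hwdef, Complex.norm_cpow_real]
      calc ‖z‖ ^ (μ * n₀) < ‖z‖ ^ (1:ℝ) :=
            Real.rpow_lt_rpow_of_exponent_gt hz0' hz (by linarith)
        _ = ‖z‖ := Real.rpow_one _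
    have hGH : (z - (((μ * n₀) ^ k * ϑ n₀ * c : ℝ) : ℂ) * w)
        - (z - (((μ * n₀) ^ m * lam n₀ * c : ℝ) : ℂ) * w) = -((P * c : ℝ) : ℂ) * w := by
      rw [hPdef, hQdef]; push_cast; ring
    rw [hGH]
    have hLHS : ‖(-((P * c : ℝ) : ℂ) * w)‖ = P * c * ‖w‖ := by
      rw [norm_mul, norm_neg, Complex.norm_real, Real.norm_eq_abs,
        _root_.abs_of_nonneg (mul_nonneg hP0 hc0.le)]
    have hRHS : ((e : ℝ) : ℂ) * (z - (((μ * n₀) ^ m * lam n₀ * c : ℝ) : ℂ) * w)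
        - ((B : ℝ) : ℂ) * (-((P * c : ℝ) : ℂ) * w)
        = ((e : ℝ) : ℂ) * z - (((e * Q - B * P) * c : ℝ) : ℂ) * w := by
      rw [hPdef, hQdef]; push_cast; ring
    rw [hRHS, hLHS]
    have hkey : ‖(((e : ℝ) : ℂ) * z)‖ -
        ‖((((e * Q - B * P) * c : ℝ) : ℂ) * w)‖
        ≤ ‖(((e : ℝ) : ℂ) * z - (((e * Q - B * P) * c : ℝ) : ℂ) * w)‖ := by
      exact
        norm_sub_norm_le (((e : ℝ) : ℂ) * z) ((((e * Q - B * P) * c : ℝ) : ℂ) * w)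
    have habs1 : ‖(((e : ℝ) : ℂ) * z)‖ = e * ‖z‖ := by
      rw [norm_mul, Complex.norm_real, Real.norm_eq_abs, abs_of_pos he0]
    have habs2 : ‖((((e * Q - B * P) * c : ℝ) : ℂ) * w)‖
        = (e * Q - B * P) * c * ‖w‖ := by
      have hnn : 0 ≤ e * Q - B * P := by nlinarith
      rw [norm_mul, Complex.norm_real, Real.norm_eq_abs, _root_.abs_of_nonneg (mul_nonneg hnn hc0.le)]
    refine lt_of_lt_of_le ?_ hkey
    rw [habs1, habs2]
    have hcomb : P * c * ‖w‖ + (e * Q - B * P) * c * ‖w‖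
        = Ξ * c * ‖w‖ := by rw [hΞPQ]; ring
    have hfin : Ξ * c * ‖w‖ < e * ‖z‖ := by
      rw [hΞc]
      exact (mul_lt_mul_iff_right₀ he0).2 hw
    linarith [hfin, hcomb.ge, hcomb.le]
end

section
/- F_μ belongs to the class Ẽ if and only if the series Σ_{n=2}^∞ aₙ r^{μn} converges for every 0 ≤ r < 1 and there exists a sequence (ηₙ)_{n≥1} of nonnegative reals with Σ_{n=1}^∞ ηₙ = 1 such that Ξ(n)·aₙ = ηₙ·(A−B)(1−γ) for every n ≥ 2. (Equivalently, F_μ = Σ_{n≥1} ηₙ F_{μn}, where F_{μ1}(z) = z and F_{μn}(z) = z − ((A−B)(1−γ)/Ξ(n)) z^{μn} for n ≥ 2; this is the extreme-point representation of the class Ẽ.) -/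
open Complex

private lemma absTerm (c : ℝ) (hc : 0 ≤ c) (z : ℂ) (t : ℝ) (ht : 0 < t) :
    ‖(c : ℂ) * z ^ ((t : ℝ) : ℂ)‖ = c * ‖z‖ ^ t := by
  rcases eq_or_ne z 0 with rfl | hz
  · rw [Complex.zero_cpow (Complex.ofReal_ne_zero.2 ht.ne'), mul_zero, norm_zero]
    simp [Real.zero_rpow ht.ne']
  · rw [norm_mul, Complex.norm_real, Real.norm_of_nonneg hc, Complex.norm_cpow_of_ne_zero hz]
    simp

set_option maxHeartbeats 1000000 in
/-- extreme points, Theorem 2.5 of the paper: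
`F_μ ∈ Ẽ_{k,m}(Φ_μ,Ψ_μ,A,B,μ,γ)` if and only if `Σ_{n≥2} aₙ r^{μn}` converges for
every `0 ≤ r < 1` and there is a sequence `(ηₙ)_{n≥1}` of nonnegative reals with
`Σ_{n≥1} ηₙ = 1` and `Ξ(n)aₙ = ηₙ (A−B)(1−γ)` for all `n ≥ 2`; equivalently
`F_μ = Σ_{n≥1} ηₙ F_{μn}` with `F_{μ1}(z) = z` and
`F_{μn}(z) = z − ((A−B)(1−γ)/Ξ(n)) z^{μn}` for `n ≥ 2`. -/
theorem stmt9 (μ A B γ : ℝ) (k m : ℕ) (a ϑ lam : ℕ → ℝ)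
    (hμ : 1 ≤ μ) (hkm : m ≤ k)
    (hB : -1 ≤ B) (hBA : B < A) (hA : A ≤ 1) (hB0 : B < 0)
    (hγ0 : 0 ≤ γ) (hγ1 : γ < 1)
    (ha : ∀ n, 2 ≤ n → 0 ≤ a n)
    (hlam : ∀ n, 2 ≤ n → 0 ≤ lam n) (hϑ : ∀ n, 2 ≤ n → lam n ≤ ϑ n) :
    memE μ A B γ k m ϑ lam a ↔
      ((∀ r : ℝ, 0 ≤ r → r < 1 →
        Summable fun n : ℕ => a (n + 2) * r ^ (μ * (n + 2 : ℕ) : ℝ)) ∧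
      ∃ η : ℕ → ℝ, (∀ n, 1 ≤ n → 0 ≤ η n) ∧
        HasSum (fun n : ℕ => η (n + 1)) 1 ∧
        ∀ n, 2 ≤ n →
          Xi μ A B γ k m ϑ lam n * a n = η n * ((A - B) * (1 - γ))) := by
  classical
  set C := (A - B) * (1 - γ) with hCdef
  have hC : 0 < C := mul_pos (by linarith) (by linarith)
  have hB1 : (0:ℝ) < 1 - B := by linarith
  -- general-index facts
  have hXi_split : ∀ n : ℕ, Xi μ A B γ k m ϑ lam n * a n
      = (1 - B) * ((μ * n) ^ k * ϑ n * a n - (μ * n) ^ m * lam n * a n)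
        + C * ((μ * n) ^ m * lam n * a n) := by
    intro n; simp only [Xi, hCdef]; ring
  have hmono : ∀ n : ℕ, 2 ≤ n →
      0 ≤ (μ * n) ^ m * lam n * a n ∧ (μ * n) ^ m * lam n * a n ≤ (μ * n) ^ k * ϑ n * a n := by
    intro n hn
    have hn1 : (1:ℝ) ≤ (n:ℝ) := by exact_mod_cast Nat.one_le_of_lt hn
    have h1 : (1:ℝ) ≤ μ * n := by nlinarith
    have hl := hlam n hn
    have hth := hl.trans (hϑ n hn)
    have han := ha n hn
    have hpow : (μ * (n:ℝ)) ^ m ≤ (μ * (n:ℝ)) ^ k := pow_le_pow_right₀ h1 hkm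
    constructor
    · have : (0:ℝ) ≤ (μ * (n:ℝ)) ^ m := by positivity
      positivity
    · have hstep : (μ * (n:ℝ)) ^ m * lam n ≤ (μ * (n:ℝ)) ^ k * ϑ n := by
        calc (μ * (n:ℝ)) ^ m * lam n ≤ (μ * (n:ℝ)) ^ k * lam n :=
              mul_le_mul_of_nonneg_right hpow hl
          _ ≤ (μ * (n:ℝ)) ^ k * ϑ n := by
              apply mul_le_mul_of_nonneg_left (hϑ n hn) (by positivity)
      exact mul_le_mul_of_nonneg_right hstep han
  have hXi_nonneg : ∀ n : ℕ, 2 ≤ n → 0 ≤ Xi μ A B γ k m ϑ lam n * a n := by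
    intro n hn
    rw [hXi_split n]
    obtain ⟨h1, h2⟩ := hmono n hn
    nlinarith
  -- the key analytic characterization
  have key : memE μ A B γ k m ϑ lam a ↔
      ((∀ r : ℝ, 0 ≤ r → r < 1 →
        Summable fun n : ℕ => a (n + 2) * r ^ (μ * (n + 2 : ℕ) : ℝ)) ∧
      Summable (fun n : ℕ => Xi μ A B γ k m ϑ lam (n + 2) * a (n + 2)) ∧
      ∑' n : ℕ, Xi μ A B γ k m ϑ lam (n + 2) * a (n + 2) ≤ C) := by
    set e : ℕ → ℝ := fun n => μ * ((n + 2 : ℕ) : ℝ) with hedef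
    have he2 : ∀ n : ℕ, (2:ℝ) ≤ e n := by
      intro n
      have h1 : (2:ℝ) ≤ ((n + 2 : ℕ) : ℝ) := by push_cast; linarith
      have h2 : (0:ℝ) ≤ ((n + 2 : ℕ) : ℝ) := by positivity
      calc (2:ℝ) ≤ 1 * ((n + 2 : ℕ) : ℝ) := by linarith
        _ ≤ μ * ((n + 2 : ℕ) : ℝ) := mul_le_mul_of_nonneg_right hμ h2
    have he0 : ∀ n : ℕ, (0:ℝ) < e n := fun n => lt_of_lt_of_le two_pos (he2 n)
    set tk : ℕ → ℝ := fun n => (μ * ((n + 2 : ℕ) : ℝ)) ^ k * ϑ (n + 2) * a (n + 2) with htkdef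
    set tm : ℕ → ℝ := fun n => (μ * ((n + 2 : ℕ) : ℝ)) ^ m * lam (n + 2) * a (n + 2) with htmdef
    set b : ℕ → ℝ := fun n => Xi μ A B γ k m ϑ lam (n + 2) * a (n + 2) with hbdef
    have hco : ∀ n : ℕ, 0 ≤ tm n ∧ tm n ≤ tk n := fun n => hmono (n + 2) (by omega)
    have htk0 : ∀ n : ℕ, 0 ≤ tk n := fun n => (hco n).1.trans (hco n).2
    have hb_eq : ∀ n : ℕ, b n = (1 - B) * (tk n - tm n) + C * tm n := fun n => hXi_split (n + 2)
    have hb0 : ∀ n : ℕ, 0 ≤ b n := fun n => hXi_nonneg (n + 2) (by omega)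
    have habs1 : ∀ (s : ℝ), 0 ≤ s → s < 1 → ‖((s:ℂ))‖ < 1 := by
      intro s h0 h1'; rwa [Complex.norm_real, Real.norm_of_nonneg h0]
    constructor
    · rintro ⟨hms, hsub⟩
      have hsa : ∀ s : ℝ, 0 ≤ s → s < 1 → Summable fun n : ℕ => a (n + 2) * s ^ e n := by
        intro s h0 h1'
        refine ((hms s (habs1 s h0 h1')).1).congr fun n => ?_
        rw [absTerm _ (ha (n + 2) (by omega)) _ _ (he0 n), Complex.norm_real,
          Real.norm_of_nonneg h0]
      have hsk : ∀ s : ℝ, 0 ≤ s → s < 1 → Summable fun n : ℕ => tk n * s ^ e n := by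
        intro s h0 h1'
        refine ((hms s (habs1 s h0 h1')).2.1).congr fun n => ?_
        rw [absTerm _ (htk0 n) _ _ (he0 n), Complex.norm_real, Real.norm_of_nonneg h0]
      have hsm : ∀ s : ℝ, 0 ≤ s → s < 1 → Summable fun n : ℕ => tm n * s ^ e n := by
        intro s h0 h1'
        refine ((hms s (habs1 s h0 h1')).2.2).congr fun n => ?_
        rw [absTerm _ (hco n).1 _ _ (he0 n), Complex.norm_real, Real.norm_of_nonneg h0]
      have hbs : ∀ s : ℝ, 0 ≤ s → s < 1 → Summable fun n : ℕ => b n * s ^ e n := by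
        intro s h0 h1'
        have h := (((hsk s h0 h1').sub (hsm s h0 h1')).mul_left (1 - B)).add
          ((hsm s h0 h1').mul_left C)
        refine h.congr fun n => ?_
        rw [hb_eq n]; ring
      set Sk : ℝ → ℝ := fun t => ∑' n : ℕ, tk n * t ^ e n with hSkdef
      set Sm : ℝ → ℝ := fun t => ∑' n : ℕ, tm n * t ^ e n with hSmdef
      set F : ℝ → ℝ := fun t => C * (t - Sm t) + B * (Sk t - Sm t) with hFdef
      have hrep : ∀ r : ℝ, 0 ≤ r → Gneg μ k ϑ a (r:ℂ) = ((r - Sk r : ℝ) : ℂ)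
          ∧ Gneg μ m lam a (r:ℂ) = ((r - Sm r : ℝ) : ℂ) := by
        intro r h0
        constructor
        · rw [Gneg]
          have hh : ∀ n : ℕ, (((μ * (n + 2 : ℕ)) ^ k * ϑ (n + 2) * a (n + 2) : ℝ) : ℂ) *
              (r:ℂ) ^ ((μ * (n + 2 : ℕ) : ℝ) : ℂ) = ((tk n * r ^ e n : ℝ) : ℂ) := by
            intro n
            rw [show ((tk n * r ^ e n : ℝ) : ℂ) = ((tk n : ℝ) : ℂ) * ((r ^ e n : ℝ) : ℂ) from
              Complex.ofReal_mul _ _, Complex.ofReal_cpow h0]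
          rw [tsum_congr hh, ← Complex.ofReal_tsum, Complex.ofReal_sub]
        · rw [Gneg]
          have hh : ∀ n : ℕ, (((μ * (n + 2 : ℕ)) ^ m * lam (n + 2) * a (n + 2) : ℝ) : ℂ) *
              (r:ℂ) ^ ((μ * (n + 2 : ℕ) : ℝ) : ℂ) = ((tm n * r ^ e n : ℝ) : ℂ) := by
            intro n
            rw [show ((tm n * r ^ e n : ℝ) : ℂ) = ((tm n : ℝ) : ℂ) * ((r ^ e n : ℝ) : ℂ) from
              Complex.ofReal_mul _ _, Complex.ofReal_cpow h0]
          rw [tsum_congr hh, ← Complex.ofReal_tsum, Complex.ofReal_sub]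
      have hineq : ∀ r : ℝ, 0 < r → r < 1 → |Sk r - Sm r| < |F r| := by
        intro r h0 h1'
        have hz0 : (r:ℂ) ≠ 0 := Complex.ofReal_ne_zero.2 h0.ne'
        have h := hsub (r:ℂ) (habs1 r h0.le h1') hz0
        obtain ⟨hk', hm'⟩ := hrep r h0.le
        rw [hk', hm'] at h
        have e1 : ((r - Sk r : ℝ) : ℂ) - ((r - Sm r : ℝ) : ℂ) = ((Sm r - Sk r : ℝ) : ℂ) := by
          push_cast; ring
        have e2 : (((A - B) * (1 - γ) : ℝ) : ℂ) * ((r - Sm r : ℝ) : ℂ) -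
            ((B:ℝ):ℂ) * ((Sm r - Sk r : ℝ) : ℂ)
            = ((C * (r - Sm r) - B * (Sm r - Sk r) : ℝ) : ℂ) := by
          rw [hCdef]; push_cast; ring
        rw [e1, e2, Complex.norm_real, Complex.norm_real, Real.norm_eq_abs, Real.norm_eq_abs] at h
        calc |Sk r - Sm r| = |Sm r - Sk r| := abs_sub_comm _ _
          _ < |C * (r - Sm r) - B * (Sm r - Sk r)| := h
          _ = |F r| := by
              congr 1
              show C * (r - Sm r) - B * (Sm r - Sk r) = C * (r - Sm r) + B * (Sk r - Sm r)
              ring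
      have hmain : ∀ r : ℝ, 0 < r → r < 1 →
          (1 - B) * (Sk r - Sm r) + C * Sm r < C * r := by
        intro r hr0 hr1
        set ρ := (1 + r) / 2 with hρdef
        have hρ1 : ρ < 1 := by rw [hρdef]; linarith
        have hρ0 : 0 < ρ := by rw [hρdef]; linarith
        have hrρ : r < ρ := by rw [hρdef]; linarith
        set M := ∑' n : ℕ, b n * ρ ^ e n with hMdef
        have hM0 : 0 ≤ M :=
          tsum_nonneg fun n => mul_nonneg (hb0 n) (Real.rpow_nonneg hρ0.le _)
        have hSkc : ContinuousOn Sk (Set.Icc 0 ρ) := by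
          refine continuousOn_tsum (u := fun n => tk n * ρ ^ e n) ?_ (hsk ρ hρ0.le hρ1) ?_
          · intro n
            exact (continuous_const.mul (Real.continuous_rpow_const (he0 n).le)).continuousOn
          · intro n t ht
            rw [Real.norm_eq_abs,
              _root_.abs_of_nonneg (mul_nonneg (htk0 n) (Real.rpow_nonneg ht.1 _))]
            exact mul_le_mul_of_nonneg_left (Real.rpow_le_rpow ht.1 ht.2 (he0 n).le) (htk0 n)
        have hSmc : ContinuousOn Sm (Set.Icc 0 ρ) := by
          refine continuousOn_tsum (u := fun n => tm n * ρ ^ e n) ?_ (hsm ρ hρ0.le hρ1) ?_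
          · intro n
            exact (continuous_const.mul (Real.continuous_rpow_const (he0 n).le)).continuousOn
          · intro n t ht
            rw [Real.norm_eq_abs,
              _root_.abs_of_nonneg (mul_nonneg (hco n).1 (Real.rpow_nonneg ht.1 _))]
            exact mul_le_mul_of_nonneg_left (Real.rpow_le_rpow ht.1 ht.2 (he0 n).le) (hco n).1
        have hFc : ContinuousOn F (Set.Icc 0 ρ) :=
          (continuousOn_const.mul (continuousOn_id.sub hSmc)).add
            (continuousOn_const.mul (hSkc.sub hSmc))
        have hbound : ∀ t : ℝ, 0 < t → t ≤ ρ →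
            C * Sm t + (-B) * (Sk t - Sm t) ≤ (t / ρ) ^ (2:ℝ) * M := by
          intro t ht0 htρ
          have ht1 : t < 1 := lt_of_le_of_lt htρ hρ1
          have hsk' := hsk t ht0.le ht1
          have hsm' := hsm t ht0.le ht1
          have hsum1 : Summable (fun n : ℕ => C * (tm n * t ^ e n) +
              (-B) * (tk n * t ^ e n - tm n * t ^ e n)) :=
            (hsm'.mul_left C).add ((hsk'.sub hsm').mul_left (-B))
          have lhs_eq : C * Sm t + (-B) * (Sk t - Sm t) = ∑' n : ℕ,
              (C * (tm n * t ^ e n) + (-B) * (tk n * t ^ e n - tm n * t ^ e n)) := by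
            rw [Summable.tsum_add (hsm'.mul_left C) ((hsk'.sub hsm').mul_left (-B)),
              tsum_mul_left, tsum_mul_left, Summable.tsum_sub hsk' hsm']
          rw [lhs_eq, hMdef, ← tsum_mul_left]
          refine Summable.tsum_le_tsum (fun n => ?_) hsum1 ((hbs ρ hρ0.le hρ1).mul_left _)
          have h1 : t ^ e n = ρ ^ e n * (t / ρ) ^ e n := by
            rw [Real.div_rpow ht0.le hρ0.le, mul_div_cancel₀]
            exact (Real.rpow_pos_of_pos hρ0 _).ne'
          have h2 : (t / ρ) ^ (e n) ≤ (t / ρ) ^ (2:ℝ) :=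
            Real.rpow_le_rpow_of_exponent_ge (div_pos ht0 hρ0) ((div_le_one hρ0).2 htρ) (he2 n)
          have hc2 : C * tm n + (-B) * (tk n - tm n) ≤ b n := by
            have h3 : C * tm n + (-B) * (tk n - tm n) + (tk n - tm n) = b n := by
              rw [hb_eq n]; ring
            have h4 : 0 ≤ tk n - tm n := sub_nonneg.2 (hco n).2
            linarith
          have ht_e : 0 ≤ t ^ e n := Real.rpow_nonneg ht0.le _
          calc C * (tm n * t ^ e n) + (-B) * (tk n * t ^ e n - tm n * t ^ e n)
              = (C * tm n + (-B) * (tk n - tm n)) * t ^ e n := by ring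
            _ ≤ b n * t ^ e n := mul_le_mul_of_nonneg_right hc2 ht_e
            _ = b n * ρ ^ e n * (t / ρ) ^ e n := by rw [h1]; ring
            _ ≤ b n * ρ ^ e n * (t / ρ) ^ (2:ℝ) := by
                refine mul_le_mul_of_nonneg_left h2 ?_
                exact mul_nonneg (hb0 n) (Real.rpow_nonneg hρ0.le _)
            _ = (t / ρ) ^ (2:ℝ) * (b n * ρ ^ e n) := by ring
        set t₀ := min (r / 2) (C * ρ ^ 2 / (2 * (M + 1))) with ht₀def
        have ht₀0 : 0 < t₀ := lt_min (by linarith) (by positivity)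
        have ht₀r : t₀ < r := lt_of_le_of_lt (min_le_left _ _) (by linarith)
        have hFt₀ : 0 < F t₀ := by
          have hb' := hbound t₀ ht₀0 (le_of_lt (ht₀r.trans hrρ))
          have hFval : F t₀ = C * t₀ - (C * Sm t₀ + (-B) * (Sk t₀ - Sm t₀)) := by
            show C * (t₀ - Sm t₀) + B * (Sk t₀ - Sm t₀) = _
            ring
          have hpow2 : (t₀ / ρ) ^ (2:ℝ) = t₀ ^ 2 / ρ ^ 2 := by
            rw [show ((2:ℝ)) = ((2:ℕ):ℝ) by norm_num, Real.rpow_natCast, div_pow]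
          have h3 : t₀ ≤ C * ρ ^ 2 / (2 * (M + 1)) := min_le_right _ _
          have h4 : t₀ * M ≤ C * ρ ^ 2 / (2 * (M + 1)) * M :=
            mul_le_mul_of_nonneg_right h3 hM0
          have h5 : C * ρ ^ 2 / (2 * (M + 1)) * M < C * ρ ^ 2 := by
            rw [div_mul_eq_mul_div, div_lt_iff₀ (by positivity)]
            have hρ2 : (0:ℝ) < ρ ^ 2 := by positivity
            nlinarith [mul_pos hC hρ2, mul_nonneg (mul_nonneg hC.le hρ2.le) hM0]
          have h6 : t₀ * M < C * ρ ^ 2 := lt_of_le_of_lt h4 h5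
          have h7 : (t₀ / ρ) ^ (2:ℝ) * M < C * t₀ := by
            rw [hpow2]
            have hρ2 : (0:ℝ) < ρ ^ 2 := by positivity
            rw [div_mul_eq_mul_div, div_lt_iff₀ hρ2]
            nlinarith
          linarith
        have hFne : ∀ t : ℝ, 0 < t → t < 1 → F t ≠ 0 := by
          intro t h0 h1' hFt
          have h := hineq t h0 h1'
          rw [hFt, abs_zero] at h
          exact (abs_nonneg _).not_gt h
        have hFr : 0 < F r := by
          rcases lt_trichotomy (F r) 0 with hneg | h0 | hpos
          · exfalso
            have hsub' : Set.Icc t₀ r ⊆ Set.Icc 0 ρ := Set.Icc_subset_Icc ht₀0.le hrρ.le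
            have himage := intermediate_value_Icc' ht₀r.le (hFc.mono hsub')
              (Set.mem_Icc.2 ⟨hneg.le, hFt₀.le⟩)
            obtain ⟨ζ, hζ, hζ0⟩ := himage
            exact hFne ζ (lt_of_lt_of_le ht₀0 hζ.1) (lt_of_le_of_lt hζ.2 hr1) hζ0
          · exact absurd h0 (hFne r hr0 hr1)
          · exact hpos
        have h := hineq r hr0 hr1
        rw [_root_.abs_of_pos hFr] at h
        have h2 : Sk r - Sm r < F r := lt_of_le_of_lt (le_abs_self _) h
        have h3 : F r = C * (r - Sm r) + B * (Sk r - Sm r) := rfl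
        rw [h3] at h2
        linarith
      have hlt : ∀ r : ℝ, 0 < r → r < 1 → ∑' n : ℕ, b n * r ^ e n ≤ C * r := by
        intro r h0 h1'
        have heq : ∑' n : ℕ, b n * r ^ e n = (1 - B) * (Sk r - Sm r) + C * Sm r := by
          have hterm : ∀ n : ℕ, b n * r ^ e n =
              (1 - B) * (tk n * r ^ e n - tm n * r ^ e n) + C * (tm n * r ^ e n) := by
            intro n; rw [hb_eq n]; ring
          rw [tsum_congr hterm,
            Summable.tsum_add (((hsk r h0.le h1').sub (hsm r h0.le h1')).mul_left (1 - B))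
              ((hsm r h0.le h1').mul_left C),
            tsum_mul_left, tsum_mul_left, Summable.tsum_sub (hsk r h0.le h1') (hsm r h0.le h1')]
        rw [heq]
        exact (hmain r h0 h1').le
      have hpartial : ∀ N : ℕ, ∑ i ∈ Finset.range N, b i ≤ C := by
        intro N
        have htend : Filter.Tendsto
            (fun r : ℝ => C * r - ∑ i ∈ Finset.range N, b i * r ^ e i)
            (nhdsWithin 1 (Set.Ioo (0:ℝ) 1))
            (nhds (C * 1 - ∑ i ∈ Finset.range N, b i * 1 ^ e i)) := by
          refine Filter.Tendsto.mono_left ?_ nhdsWithin_le_nhds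
          exact ((continuous_const.mul continuous_id).sub
            (continuous_finset_sum _ fun i _ =>
              continuous_const.mul (Real.continuous_rpow_const (he0 i).le))).tendsto 1
        have hev : ∀ᶠ r in nhdsWithin 1 (Set.Ioo (0:ℝ) 1),
            (0:ℝ) ≤ C * r - ∑ i ∈ Finset.range N, b i * r ^ e i := by
          filter_upwards [self_mem_nhdsWithin] with r hr
          have h2 : ∑ i ∈ Finset.range N, b i * r ^ e i ≤ ∑' n : ℕ, b n * r ^ e n :=
            Summable.sum_le_tsum _ (fun i _ => mul_nonneg (hb0 i) (Real.rpow_nonneg hr.1.le _))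
              (hbs r hr.1.le hr.2)
          have h3 := hlt r hr.1 hr.2
          linarith
        haveI hne : (nhdsWithin (1:ℝ) (Set.Ioo (0:ℝ) 1)).NeBot :=
          right_nhdsWithin_Ioo_neBot zero_lt_one
        have h4 := ge_of_tendsto htend hev
        have h5 : ∀ i : ℕ, b i * (1:ℝ) ^ e i = b i := by
          intro i; rw [Real.one_rpow, mul_one]
        rw [Finset.sum_congr rfl fun i _ => h5 i] at h4
        linarith
      exact ⟨hsa, summable_of_sum_range_le hb0 hpartial,
        Real.tsum_le_of_sum_range_le hb0 hpartial⟩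
    · rintro ⟨h1, hsum, hle⟩
      have hcmin : (0:ℝ) < min (1 - B) C := lt_min hB1 hC
      have hbtk : ∀ n : ℕ, min (1 - B) C * tk n ≤ b n := by
        intro n
        rw [hb_eq n]
        have h2 := (hco n).1
        have h3 := (hco n).2
        have h4 : min (1 - B) C ≤ 1 - B := min_le_left _ _
        have h5 : min (1 - B) C ≤ C := min_le_right _ _
        nlinarith
      have hskr : ∀ r : ℝ, 0 ≤ r → r < 1 → Summable fun n : ℕ => tk n * r ^ e n := by
        intro r hr0 hr1
        refine Summable.of_nonneg_of_le
          (fun n => mul_nonneg (htk0 n) (Real.rpow_nonneg hr0 _)) (fun n => ?_)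
          (hsum.div_const (min (1 - B) C))
        have h2 : r ^ e n ≤ 1 := Real.rpow_le_one hr0 hr1.le (he0 n).le
        have h3 : tk n * r ^ e n ≤ tk n * 1 := mul_le_mul_of_nonneg_left h2 (htk0 n)
        have h4 : tk n ≤ b n / min (1 - B) C := by
          rw [le_div_iff₀ hcmin]
          calc tk n * min (1 - B) C = min (1 - B) C * tk n := by ring
            _ ≤ b n := hbtk n
        calc tk n * r ^ e n ≤ tk n := by linarith
          _ ≤ b n / min (1 - B) C := h4
      have hsmr : ∀ r : ℝ, 0 ≤ r → r < 1 → Summable fun n : ℕ => tm n * r ^ e n := by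
        intro r hr0 hr1
        exact Summable.of_nonneg_of_le
          (fun n => mul_nonneg (hco n).1 (Real.rpow_nonneg hr0 _))
          (fun n => mul_le_mul_of_nonneg_right (hco n).2 (Real.rpow_nonneg hr0 _))
          (hskr r hr0 hr1)
      have hbsr : ∀ r : ℝ, 0 ≤ r → r < 1 → Summable fun n : ℕ => b n * r ^ e n := by
        intro r hr0 hr1
        have h := (((hskr r hr0 hr1).sub (hsmr r hr0 hr1)).mul_left (1 - B)).add
          ((hsmr r hr0 hr1).mul_left C)
        refine h.congr fun n => ?_
        rw [hb_eq n]; ring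
      constructor
      · intro z hz
        rcases eq_or_ne z 0 with rfl | hz0
        · refine ⟨?_, ?_, ?_⟩ <;>
          · refine summable_zero.congr fun n => ?_
            rw [Complex.zero_cpow (Complex.ofReal_ne_zero.2 (he0 n).ne'), mul_zero, norm_zero]
        · have hr0 : 0 < ‖z‖ := norm_pos_iff.2 hz0
          refine ⟨?_, ?_, ?_⟩
          · exact (h1 (‖z‖) hr0.le hz).congr fun n =>
              (absTerm _ (ha (n + 2) (by omega)) z _ (he0 n)).symm
          · exact (hskr (‖z‖) hr0.le hz).congr fun n =>
              (absTerm _ (htk0 n) z _ (he0 n)).symm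
          · exact (hsmr (‖z‖) hr0.le hz).congr fun n =>
              (absTerm _ (hco n).1 z _ (he0 n)).symm
      · intro z hz hz0
        have hr0 : 0 < ‖z‖ := norm_pos_iff.2 hz0
        have hskr' := hskr (‖z‖) hr0.le hz
        have hsmr' := hsmr (‖z‖) hr0.le hz
        have hbsr' := hbsr (‖z‖) hr0.le hz
        have hcsk : Summable fun n : ℕ =>
            (((μ * (n + 2 : ℕ)) ^ k * ϑ (n + 2) * a (n + 2) : ℝ) : ℂ) *
              z ^ ((μ * (n + 2 : ℕ) : ℝ) : ℂ) := by
          apply Summable.of_norm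
          exact hskr'.congr fun n => (absTerm _ (htk0 n) z _ (he0 n)).symm
        have hcsm : Summable fun n : ℕ =>
            (((μ * (n + 2 : ℕ)) ^ m * lam (n + 2) * a (n + 2) : ℝ) : ℂ) *
              z ^ ((μ * (n + 2 : ℕ) : ℝ) : ℂ) := by
          apply Summable.of_norm
          exact hsmr'.congr fun n => (absTerm _ (hco n).1 z _ (he0 n)).symm
        set SK := ∑' n : ℕ, (((μ * (n + 2 : ℕ)) ^ k * ϑ (n + 2) * a (n + 2) : ℝ) : ℂ) *
          z ^ ((μ * (n + 2 : ℕ) : ℝ) : ℂ) with hSKdef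
        set SM := ∑' n : ℕ, (((μ * (n + 2 : ℕ)) ^ m * lam (n + 2) * a (n + 2) : ℝ) : ℂ) *
          z ^ ((μ * (n + 2 : ℕ) : ℝ) : ℂ) with hSMdef
        have hGk : Gneg μ k ϑ a z = z - SK := rfl
        have hGm : Gneg μ m lam a z = z - SM := rfl
        rw [hGk, hGm]
        set X := ∑' n : ℕ, (tk n - tm n) * ‖z‖ ^ e n with hXdef
        set Y := ∑' n : ℕ, tm n * ‖z‖ ^ e n with hYdef
        have hdsum : Summable fun n : ℕ => (tk n - tm n) * ‖z‖ ^ e n := by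
          refine (hskr'.sub hsmr').congr fun n => ?_
          ring
        have hWX : ‖SK - SM‖ ≤ X := by
          have hdiff : SK - SM = ∑' n : ℕ, (((tk n - tm n : ℝ)) : ℂ) *
              z ^ ((μ * (n + 2 : ℕ) : ℝ) : ℂ) := by
            rw [hSKdef, hSMdef, ← Summable.tsum_sub hcsk hcsm]
            refine tsum_congr fun n => ?_
            simp only [htkdef, htmdef]
            push_cast
            ring
          rw [hdiff]
          have hnorm : Summable fun n : ℕ =>
              ‖(((tk n - tm n : ℝ)) : ℂ) * z ^ ((μ * (n + 2 : ℕ) : ℝ) : ℂ)‖ := by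
            exact hdsum.congr fun n =>
              (absTerm _ (sub_nonneg.2 (hco n).2) z _ (he0 n)).symm
          refine (norm_tsum_le_tsum_norm hnorm).trans_eq ?_
          refine tsum_congr fun n => ?_
          exact absTerm _ (sub_nonneg.2 (hco n).2) z _ (he0 n)
        have hSMb : ‖SM‖ ≤ Y := by
          have hnorm : Summable fun n : ℕ =>
              ‖(((μ * (n + 2 : ℕ)) ^ m * lam (n + 2) * a (n + 2) : ℝ) : ℂ) *
                z ^ ((μ * (n + 2 : ℕ) : ℝ) : ℂ)‖ := by
            exact hsmr'.congr fun n => (absTerm _ (hco n).1 z _ (he0 n)).symm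
          rw [hSMdef]
          refine (norm_tsum_le_tsum_norm hnorm).trans_eq ?_
          refine tsum_congr fun n => ?_
          exact absTerm _ (hco n).1 z _ (he0 n)
        have hX0 : 0 ≤ X := tsum_nonneg fun n =>
          mul_nonneg (sub_nonneg.2 (hco n).2) (Real.rpow_nonneg hr0.le _)
        have hY0 : 0 ≤ Y := tsum_nonneg fun n =>
          mul_nonneg (hco n).1 (Real.rpow_nonneg hr0.le _)
        have hsum_rXY : (1 - B) * X + C * Y < C * ‖z‖ := by
          have heq : (1 - B) * X + C * Y = ∑' n : ℕ, b n * ‖z‖ ^ e n := by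
            rw [hXdef, hYdef, ← tsum_mul_left, ← tsum_mul_left,
              ← Summable.tsum_add (hdsum.mul_left (1 - B)) (hsmr'.mul_left C)]
            refine tsum_congr fun n => ?_
            rw [hb_eq n]; ring
          have h2 : ∀ n : ℕ, b n * ‖z‖ ^ e n ≤ b n * ‖z‖ ^ (2:ℝ) :=
            fun n => mul_le_mul_of_nonneg_left
              (Real.rpow_le_rpow_of_exponent_ge hr0 hz.le (he2 n)) (hb0 n)
          have h3 : Summable fun n : ℕ => b n * ‖z‖ ^ (2:ℝ) := hsum.mul_right _
          have h4 : ∑' n : ℕ, b n * ‖z‖ ^ e n ≤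
              ∑' n : ℕ, b n * ‖z‖ ^ (2:ℝ) := Summable.tsum_le_tsum h2 hbsr' h3
          have h5 : ∑' n : ℕ, b n * ‖z‖ ^ (2:ℝ) =
              (∑' n : ℕ, b n) * ‖z‖ ^ (2:ℝ) := tsum_mul_right
          have h6 : ‖z‖ ^ (2:ℝ) < ‖z‖ := by
            have h7 := Real.rpow_lt_rpow_of_exponent_gt hr0 hz one_lt_two
            rwa [Real.rpow_one] at h7
          have h7 : (∑' n : ℕ, b n) * ‖z‖ ^ (2:ℝ) ≤ C * ‖z‖ ^ (2:ℝ) :=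
            mul_le_mul_of_nonneg_right hle (Real.rpow_nonneg hr0.le _)
          have h8 : C * ‖z‖ ^ (2:ℝ) < C * ‖z‖ := (mul_lt_mul_iff_right₀ hC).2 h6
          rw [heq]
          linarith
        have hW : ‖(z - SK) - (z - SM)‖ ≤ X := by
          calc ‖(z - SK) - (z - SM)‖ = ‖SM - SK‖ := by
                congr 1; ring
            _ = ‖SK - SM‖ := norm_sub_rev SM SK
            _ ≤ X := hWX
        have hR : C * ‖z‖ - (C * Y + (-B) * X) ≤
            ‖(((A - B) * (1 - γ) : ℝ):ℂ) * (z - SM) -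
              ((B:ℝ):ℂ) * ((z - SK) - (z - SM))‖ := by
          have e3 : (((A - B) * (1 - γ) : ℝ):ℂ) * (z - SM) -
              ((B:ℝ):ℂ) * ((z - SK) - (z - SM))
              = ((C:ℝ):ℂ) * z - (((C:ℝ):ℂ) * SM + ((B:ℝ):ℂ) * (SM - SK)) := by
            rw [hCdef]; push_cast; ring
          rw [e3]
          have h9 : ‖((C:ℝ):ℂ) * SM + ((B:ℝ):ℂ) * (SM - SK)‖ ≤
              C * Y + (-B) * X := by
            refine (norm_add_le _ _).trans ?_
            have hA1 : ‖((C:ℝ):ℂ) * SM‖ ≤ C * Y := by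
              rw [norm_mul, Complex.norm_real, Real.norm_of_nonneg hC.le]
              exact mul_le_mul_of_nonneg_left hSMb hC.le
            have hA2 : ‖((B:ℝ):ℂ) * (SM - SK)‖ ≤ (-B) * X := by
              rw [norm_mul, Complex.norm_real, Real.norm_eq_abs, _root_.abs_of_neg hB0,
                norm_sub_rev SM SK]
              exact mul_le_mul_of_nonneg_left hWX (by linarith)
            linarith
          have h10 : ‖((C:ℝ):ℂ) * z‖ = C * ‖z‖ := by
            rw [norm_mul, Complex.norm_real, Real.norm_of_nonneg hC.le]
          have h11 : ‖((C:ℝ):ℂ) * z‖ -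
              ‖((C:ℝ):ℂ) * SM + ((B:ℝ):ℂ) * (SM - SK)‖ ≤
              ‖((C:ℝ):ℂ) * z -
                (((C:ℝ):ℂ) * SM + ((B:ℝ):ℂ) * (SM - SK))‖ := by
            exact norm_sub_norm_le _ _
          rw [h10] at h11
          linarith
        calc ‖(z - SK) - (z - SM)‖ ≤ X := hW
          _ < C * ‖z‖ - (C * Y + (-B) * X) := by linarith
          _ ≤ _ := hR
  rw [key]
  set E : ℕ → ℝ := fun i => Xi μ A B γ k m ϑ lam (i + 2) * a (i + 2) with hEdef
  constructor
  · rintro ⟨h1, hsum, hle⟩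
    refine ⟨h1, fun n => if n = 1 then 1 - (∑' i : ℕ, E i) / C
      else if 2 ≤ n then Xi μ A B γ k m ϑ lam n * a n / C else 0, ?_, ?_, ?_⟩
    · intro n hn
      rcases eq_or_ne n 1 with rfl | hn1
      · have h2 : (∑' i : ℕ, E i) / C ≤ 1 := (div_le_one hC).2 hle
        show (0:ℝ) ≤ 1 - (∑' i : ℕ, E i) / C
        linarith
      · have hn2 : 2 ≤ n := by omega
        simp only [if_neg hn1, if_pos hn2]
        exact div_nonneg (hXi_nonneg n hn2) hC.le
    · refine (hasSum_nat_add_iff' 1).1 ?_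
      have h2 : HasSum (fun n : ℕ => E n / C) ((∑' i : ℕ, E i) / C) := hsum.hasSum.div_const C
      have hfe : (fun n : ℕ => E n / C) = (fun n : ℕ =>
          if n + 1 + 1 = 1 then 1 - (∑' i : ℕ, E i) / C
          else if 2 ≤ n + 1 + 1 then Xi μ A B γ k m ϑ lam (n + 1 + 1) * a (n + 1 + 1) / C
          else 0) := by
        funext n
        rw [if_neg (by omega), if_pos (by omega)]
      have h3 := hfe ▸ h2
      convert h3 using 1
      · rfl
      rw [Finset.sum_range_one]
      norm_num
    · intro n hn
      have hn1 : n ≠ 1 := by omega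
      simp only [if_neg hn1, if_pos hn]
      rw [div_mul_cancel₀ _ hC.ne']
  · rintro ⟨h1, η, hη0, hηsum, hηeq⟩
    have h2 : HasSum (fun n : ℕ => η (n + 2)) (1 - η 1) := by
      have h3 := (hasSum_nat_add_iff' (f := fun n : ℕ => η (n + 1)) 1).2 hηsum
      simpa using h3
    have hbη : ∀ n : ℕ, E n = η (n + 2) * C := fun n => hηeq (n + 2) (by omega)
    have hbs : HasSum E ((1 - η 1) * C) := by
      have h4 := h2.mul_right C
      rwa [show (fun n : ℕ => η (n + 2) * C) = E from funext fun n => (hbη n).symm] at h4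
    refine ⟨h1, hbs.summable, ?_⟩
    rw [hbs.tsum_eq]
    have hη1 : 0 ≤ η 1 := hη0 1 le_rfl
    nlinarith
end
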